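/- arXiv:1911.02167 — 5 statements merged into one kernel-verified Lean document; each statement's English description precedes it below -/
import Mathlib

section
/- Let w_1=(1,0,0), w_2=(1/2,√3/2,0), w_3=w_2−w_1, w_4=(1/2,√3/6,√6/3), w_5=w_4−w_2, w_6=w_4−w_1 be the edge vectors of a regular unit tetrahedron. There exists a constant C_1 > 0 such that for every linear map A: ℝ³ → ℝ³ with det(A) > 0, dist²(A, SO(3)) := inf_{R∈SO(3)} |A − R|² ≤ C_1 · Σ_{i=1}^6 (|A w_i| − 1)², where |·| is the Frobenius norm on matrices and the Euclidean norm on vectors. -/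
open Matrix

/-- The special orthogonal group SO(3) as a set of matrices. -/
def SO3 : Set (Matrix (Fin 3) (Fin 3) ℝ) :=
  {R | R ∈ Matrix.orthogonalGroup (Fin 3) ℝ ∧ R.det = 1}

/-- Frobenius norm of a 3×3 matrix. -/
noncomputable def frob (A : Matrix (Fin 3) (Fin 3) ℝ) : ℝ :=
  Real.sqrt (∑ i, ∑ j, (A i j) ^ 2)

/-- Squared distance of a matrix to SO(3) in Frobenius norm. -/
noncomputable def dist2SO (A : Matrix (Fin 3) (Fin 3) ℝ) : ℝ :=
  sInf {t | ∃ R ∈ SO3, t = frob (A - R) ^ 2}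

/-- Euclidean norm on ℝ³. -/
noncomputable def enorm3 (v : Fin 3 → ℝ) : ℝ := Real.sqrt (∑ i, (v i) ^ 2)

/-- The six edge vectors of the regular unit tetrahedron. -/
noncomputable def w : Fin 6 → (Fin 3 → ℝ) :=
  ![![1, 0, 0],
    ![1/2, Real.sqrt 3 / 2, 0],
    ![1/2 - 1, Real.sqrt 3 / 2 - 0, 0 - 0],
    ![1/2, Real.sqrt 3 / 6, Real.sqrt 6 / 3],
    ![1/2 - 1/2, Real.sqrt 3 / 6 - Real.sqrt 3 / 2, Real.sqrt 6 / 3 - 0],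
    ![1/2 - 1, Real.sqrt 3 / 6 - 0, Real.sqrt 6 / 3 - 0]]

/-! ### Auxiliary material -/

noncomputable def frobsq (A : Matrix (Fin 3) (Fin 3) ℝ) : ℝ := ∑ i, ∑ j, (A i j)^2

lemma frobsq_nonneg (A : Matrix (Fin 3) (Fin 3) ℝ) : 0 ≤ frobsq A :=
  Finset.sum_nonneg fun _ _ => Finset.sum_nonneg fun _ _ => sq_nonneg _

lemma frob_sq_eq (A : Matrix (Fin 3) (Fin 3) ℝ) : frob A ^ 2 = frobsq A :=
  Real.sq_sqrt (frobsq_nonneg A)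

lemma frobsq_eq_trace (A : Matrix (Fin 3) (Fin 3) ℝ) : frobsq A = (Aᵀ * A).trace := by
  simp only [frobsq, Matrix.trace, Matrix.diag, Matrix.mul_apply, Matrix.transpose_apply, sq]
  rw [Finset.sum_comm]

lemma frobsq_orth_mul (R B : Matrix (Fin 3) (Fin 3) ℝ) (h : Rᵀ * R = 1) :
    frobsq (R * B) = frobsq B := by
  rw [frobsq_eq_trace, frobsq_eq_trace, Matrix.transpose_mul, mul_assoc, ← mul_assoc Rᵀ, h,
    one_mul]

lemma frobsq_conj (U B : Matrix (Fin 3) (Fin 3) ℝ) (h : Uᵀ * U = 1) :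
    frobsq (U * B * Uᵀ) = frobsq B := by
  rw [mul_assoc, frobsq_orth_mul _ _ h, frobsq_eq_trace, frobsq_eq_trace,
    Matrix.transpose_mul, Matrix.transpose_transpose, mul_assoc,
    Matrix.trace_mul_comm, mul_assoc, mul_assoc, h, mul_one]

lemma conjT_eq_T (A : Matrix (Fin 3) (Fin 3) ℝ) : Aᴴ = Aᵀ :=
  Matrix.conjTranspose_eq_transpose_of_trivial A

lemma frobsq_diag_sub_one (d : Fin 3 → ℝ) :
    frobsq (Matrix.diagonal d - 1) = ∑ i, (d i - 1)^2 := by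
  simp [frobsq, Matrix.sub_apply, Matrix.diagonal_apply, Matrix.one_apply,
    Fin.sum_univ_three]

set_option maxHeartbeats 1000000 in
lemma polar (A : Matrix (Fin 3) (Fin 3) ℝ) (hA : A.det > 0) :
    ∃ R ∈ SO3, frobsq (A - R) ≤ frobsq (Aᵀ * A - 1) := by
  have hM : (Aᵀ * A).PosSemidef := by
    have := Matrix.posSemidef_conjTranspose_mul_self A
    rwa [conjT_eq_T] at this
  open scoped MatrixOrder in set S := CFC.sqrt (Aᵀ * A) with hSdef
  have hS : S.PosSemidef := by open scoped MatrixOrder in exact (CFC.sqrt_nonneg _).posSemidef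
  have hSH : S.IsHermitian := hS.1
  have hSsym : Sᵀ = S := by rw [← conjT_eq_T]; exact hSH
  have hSS : S * S = Aᵀ * A := by open scoped MatrixOrder in exact CFC.sqrt_mul_sqrt_self _ hM.nonneg
  have hdetSnn : 0 ≤ S.det := by
    rw [hSH.det_eq_prod_eigenvalues]
    exact Finset.prod_nonneg fun i _ => by
      simpa using hS.eigenvalues_nonneg i
  have hdetsq : S.det * S.det = A.det * A.det := by
    rw [← Matrix.det_mul, hSS, Matrix.det_mul, Matrix.det_transpose]
  have hdetS : 0 < S.det := by nlinarith
  clear_value S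
  have hdetS' : IsUnit S.det := isUnit_iff_ne_zero.2 (ne_of_gt hdetS)
  set R := A * S⁻¹ with hRdef
  have hSinvT : S⁻¹ᵀ = S⁻¹ := by rw [Matrix.transpose_nonsing_inv, hSsym]
  have hRTR : Rᵀ * R = 1 := by
    rw [hRdef, Matrix.transpose_mul, hSinvT]
    calc S⁻¹ * Aᵀ * (A * S⁻¹) = S⁻¹ * (Aᵀ * A) * S⁻¹ := by noncomm_ring
    _ = S⁻¹ * (S * S) * S⁻¹ := by rw [hSS]
    _ = (S⁻¹ * S) * (S * S⁻¹) := by noncomm_ring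
    _ = 1 := by rw [Matrix.nonsing_inv_mul S hdetS', Matrix.mul_nonsing_inv S hdetS', one_mul]
  have hdetR : R.det = 1 := by
    have h1 : R.det * R.det = 1 := by
      have := congrArg Matrix.det hRTR
      rwa [Matrix.det_mul, Matrix.det_transpose, Matrix.det_one] at this
    have h2 : 0 < R.det := by
      rw [hRdef, Matrix.det_mul, Matrix.det_nonsing_inv]
      exact mul_pos hA (by rw [Ring.inverse_eq_inv']; exact inv_pos.2 hdetS)
    nlinarith
  have hRSO : R ∈ SO3 := by
    refine ⟨(Matrix.mem_orthogonalGroup_iff (Fin 3) ℝ).2 ?_, hdetR⟩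
    have : star R = Rᵀ := conjT_eq_T R
    rw [mul_eq_one_comm.2 hRTR]
  refine ⟨R, hRSO, ?_⟩
  have hAR : A - R = R * (S - 1) := by
    rw [mul_sub, mul_one, hRdef, mul_assoc, Matrix.nonsing_inv_mul S hdetS', mul_one]
  rw [hAR, frobsq_orth_mul _ _ hRTR, ← hSS]
  set U : Matrix (Fin 3) (Fin 3) ℝ := (hSH.eigenvectorUnitary : Matrix (Fin 3) (Fin 3) ℝ) with hU
  set d : Fin 3 → ℝ := hSH.eigenvalues with hd
  have hdnn : ∀ i, 0 ≤ d i := fun i => hS.eigenvalues_nonneg i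
  have hUU : Uᵀ * U = 1 := by
    rw [← conjT_eq_T]
    exact Matrix.mem_unitaryGroup_iff'.1 hSH.eigenvectorUnitary.2
  have hUUT : U * Uᵀ = 1 := by rw [mul_eq_one_comm] at hUU; exact hUU
  have hspec' : S = U * Matrix.diagonal d * Uᵀ := by
    have h := hSH.spectral_theorem
    have hdiag : Matrix.diagonal ((RCLike.ofReal : ℝ → ℝ) ∘ hSH.eigenvalues)
        = Matrix.diagonal d := by
      congr 1
    rw [hdiag] at h
    rw [← conjT_eq_T]
    exact h
  clear_value U d
  have hspec := hspec'
  have h1 : S - 1 = U * (Matrix.diagonal d - 1) * Uᵀ := by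
    rw [mul_sub, sub_mul, hspec, mul_one, hUUT]
  have hdd : Matrix.diagonal (fun i => d i * d i) = Matrix.diagonal d * Matrix.diagonal d :=
    (Matrix.diagonal_mul_diagonal d d).symm
  have h2 : S * S - 1 = U * (Matrix.diagonal (fun i => d i * d i) - 1) * Uᵀ := by
    rw [mul_sub, sub_mul, mul_one, hUUT, hspec, hdd]
    congr 1
    calc U * Matrix.diagonal d * Uᵀ * (U * Matrix.diagonal d * Uᵀ)
        = U * Matrix.diagonal d * (Uᵀ * U) * Matrix.diagonal d * Uᵀ := by noncomm_ring
      _ = U * (Matrix.diagonal d * Matrix.diagonal d) * Uᵀ := by rw [hUU]; noncomm_ring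
  rw [h1, h2, frobsq_conj _ _ hUU, frobsq_conj _ _ hUU]
  rw [frobsq_diag_sub_one, frobsq_diag_sub_one]
  refine Finset.sum_le_sum fun i _ => ?_
  have h := hdnn i
  nlinarith [sq_nonneg (d i - 1), sq_nonneg (d i + 1)]
set_option maxHeartbeats 1000000 in
lemma qform_bound (s3 s6 a b c d e f q1 q2 q3 q4 q5 q6 : ℝ)
    (h3 : s3^2 = 3) (h6 : s6^2 = 6)
    (hq1 : q1 = a)
    (hq2 : q2 = a/4 + 3*b/4 + s3/2*d)
    (hq3 : q3 = a/4 + 3*b/4 - s3/2*d)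
    (hq4 : q4 = a/4 + b/12 + 2*c/3 + s3/6*d + s6/3*e + s3*s6/9*f)
    (hq5 : q5 = b/3 + 2*c/3 - 2*s3*s6/9*f)
    (hq6 : q6 = a/4 + b/12 + 2*c/3 - s3/6*d - s6/3*e + s3*s6/9*f) :
    a^2 + b^2 + c^2 + 2*d^2 + 2*e^2 + 2*f^2
      ≤ 8*(q1^2 + q2^2 + q3^2 + q4^2 + q5^2 + q6^2) := by
  have ha2 : a^2 = q1^2 := by rw [hq1]
  have hb : 3*b = 2*q2 + 2*q3 - q1 := by linear_combination hq1 - 2*hq2 - 2*hq3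
  have hc : 6*c = 3*q4 + 3*q5 + 3*q6 - q1 - q2 - q3 := by
    linear_combination hq1 + hq2 + hq3 - 3*hq4 - 3*hq5 - 3*hq6
  have hd : 3*d^2 = (q2 - q3)^2 := by
    linear_combination (-(q2 - q3 + s3*d))*(hq2 - hq3) - d^2*h3
  have he : 24*e^2 = (-q2 + q3 + 3*q4 - 3*q6)^2 := by
    linear_combination (-(-q2 + q3 + 3*q4 - 3*q6 + 2*s6*e))*(-hq2 + hq3 + 3*hq4 - 3*hq6)
      - 4*e^2*h6
  have hf : 72*f^2 = (-2*q1 + q2 + q3 + 3*q4 - 6*q5 + 3*q6)^2 := by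
    linear_combination
      (-(-2*q1 + q2 + q3 + 3*q4 - 6*q5 + 3*q6 + 2*s3*s6*f))*(-2*hq1 + hq2 + hq3 + 3*hq4 - 6*hq5 + 3*hq6)
      - 4*f^2*s6^2*h3 - 12*f^2*h6
  have hb2 : 9*b^2 = (2*q2 + 2*q3 - q1)^2 := by linear_combination (3*b + 2*q2 + 2*q3 - q1)*hb
  have hc2 : 36*c^2 = (3*q4 + 3*q5 + 3*q6 - q1 - q2 - q3)^2 := by
    linear_combination (6*c + 3*q4 + 3*q5 + 3*q6 - q1 - q2 - q3)*hc
  have iB : 9*(q1^2 + q2^2 + q3^2) - (2*q2 + 2*q3 - q1)^2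
      = (q2 + 2*q1)^2 + (q3 + 2*q1)^2 + (2*q3 - 2*q2)^2 := by ring
  have iC : 30*(q1^2 + q2^2 + q3^2 + q4^2 + q5^2 + q6^2)
      - (3*q4 + 3*q5 + 3*q6 - q1 - q2 - q3)^2
      = (q1 - q2)^2 + (q1 - q3)^2 + (q2 - q3)^2
        + (q4 + 3*q1)^2 + (q5 + 3*q1)^2 + (q6 + 3*q1)^2
        + (q4 + 3*q2)^2 + (q5 + 3*q2)^2 + (q6 + 3*q2)^2
        + (q4 + 3*q3)^2 + (q5 + 3*q3)^2 + (q6 + 3*q3)^2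
        + (3*q5 - 3*q4)^2 + (3*q6 - 3*q4)^2 + (3*q6 - 3*q5)^2 := by ring
  have iD : 2*(q2^2 + q3^2) - (q2 - q3)^2 = (q2 + q3)^2 := by ring
  have iE : 20*(q2^2 + q3^2 + q4^2 + q6^2) - (-q2 + q3 + 3*q4 - 3*q6)^2
      = (q2 + q3)^2 + (q4 + 3*q2)^2 + (3*q2 - q6)^2 + (q4 - 3*q3)^2 + (q6 + 3*q3)^2
        + (3*q4 + 3*q6)^2 := by ring
  have iF : 60*(q1^2 + q2^2 + q3^2 + q4^2 + q5^2 + q6^2)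
      - (-2*q1 + q2 + q3 + 3*q4 - 6*q5 + 3*q6)^2
      = (2*q2 + q1)^2 + (2*q3 + q1)^2 + (2*q4 + 3*q1)^2 + (2*q5 - 6*q1)^2 + (2*q6 + 3*q1)^2
        + (q3 - q2)^2 + (q4 - 3*q2)^2 + (q5 + 6*q2)^2 + (q6 - 3*q2)^2
        + (q4 - 3*q3)^2 + (q5 + 6*q3)^2 + (q6 - 3*q3)^2
        + (3*q5 + 6*q4)^2 + (3*q6 - 3*q4)^2 + (6*q6 + 3*q5)^2 := by ring
  linarith [ha2, hb2, hc2, hd, he, hf, iB, iC, iD, iE, iF,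
    sq_nonneg (q2 + 2*q1), sq_nonneg (q3 + 2*q1), sq_nonneg (2*q3 - 2*q2),
    sq_nonneg (q1 - q2), sq_nonneg (q1 - q3), sq_nonneg (q2 - q3),
    sq_nonneg (q4 + 3*q1), sq_nonneg (q5 + 3*q1), sq_nonneg (q6 + 3*q1),
    sq_nonneg (q4 + 3*q2), sq_nonneg (q5 + 3*q2), sq_nonneg (q6 + 3*q2),
    sq_nonneg (q4 + 3*q3), sq_nonneg (q5 + 3*q3), sq_nonneg (q6 + 3*q3),
    sq_nonneg (3*q5 - 3*q4), sq_nonneg (3*q6 - 3*q4), sq_nonneg (3*q6 - 3*q5),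
    sq_nonneg (q2 + q3),
    sq_nonneg (3*q2 - q6), sq_nonneg (q4 - 3*q3), sq_nonneg (q6 + 3*q3),
    sq_nonneg (3*q4 + 3*q6),
    sq_nonneg (2*q2 + q1), sq_nonneg (2*q3 + q1), sq_nonneg (2*q4 + 3*q1),
    sq_nonneg (2*q5 - 6*q1), sq_nonneg (2*q6 + 3*q1), sq_nonneg (q3 - q2),
    sq_nonneg (q4 - 3*q2), sq_nonneg (q5 + 6*q2), sq_nonneg (q6 - 3*q2),
    sq_nonneg (q5 + 6*q3), sq_nonneg (q6 - 3*q3),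
    sq_nonneg (3*q5 + 6*q4), sq_nonneg (3*q6 - 3*q4), sq_nonneg (6*q6 + 3*q5),
    sq_nonneg q1, sq_nonneg q2, sq_nonneg q3, sq_nonneg q4, sq_nonneg q5, sq_nonneg q6]

lemma enorm3_sq (v : Fin 3 → ℝ) : enorm3 v ^ 2 = ∑ i, (v i)^2 :=
  Real.sq_sqrt (Finset.sum_nonneg fun _ _ => sq_nonneg _)

lemma enorm3_nonneg (v : Fin 3 → ℝ) : 0 ≤ enorm3 v := Real.sqrt_nonneg _

/-- entries of `Aᵀ * A`. -/
noncomputable def Mm (A : Matrix (Fin 3) (Fin 3) ℝ) (k l : Fin 3) : ℝ := ∑ j, A j k * A j l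

lemma h3' : Real.sqrt 3 ^ 2 = 3 := Real.sq_sqrt (by norm_num)
lemma h6' : Real.sqrt 6 ^ 2 = 6 := Real.sq_sqrt (by norm_num)

lemma edge0 (A : Matrix (Fin 3) (Fin 3) ℝ) :
    enorm3 (A.mulVec (w 0)) ^ 2 - 1 = Mm A 0 0 - 1 := by
  rw [enorm3_sq]
  simp [w, Mm, Matrix.mulVec, dotProduct, Fin.sum_univ_three]
  ring

lemma edge1 (A : Matrix (Fin 3) (Fin 3) ℝ) :
    enorm3 (A.mulVec (w 1)) ^ 2 - 1 =
      (Mm A 0 0 - 1)/4 + 3*(Mm A 1 1 - 1)/4 + Real.sqrt 3/2*(Mm A 0 1) := by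
  rw [enorm3_sq]
  simp [w, Mm, Matrix.mulVec, dotProduct, Fin.sum_univ_three]
  linear_combination (1/4*(A 0 1^2 + A 1 1^2 + A 2 1^2)) * h3'

lemma edge2 (A : Matrix (Fin 3) (Fin 3) ℝ) :
    enorm3 (A.mulVec (w 2)) ^ 2 - 1 =
      (Mm A 0 0 - 1)/4 + 3*(Mm A 1 1 - 1)/4 - Real.sqrt 3/2*(Mm A 0 1) := by
  rw [enorm3_sq]
  simp [w, Mm, Matrix.mulVec, dotProduct, Fin.sum_univ_three]
  linear_combination (1/4*(A 0 1^2 + A 1 1^2 + A 2 1^2)) * h3'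

lemma edge3 (A : Matrix (Fin 3) (Fin 3) ℝ) :
    enorm3 (A.mulVec (w 3)) ^ 2 - 1 =
      (Mm A 0 0 - 1)/4 + (Mm A 1 1 - 1)/12 + 2*(Mm A 2 2 - 1)/3
        + Real.sqrt 3/6*(Mm A 0 1) + Real.sqrt 6/3*(Mm A 0 2)
        + Real.sqrt 3*Real.sqrt 6/9*(Mm A 1 2) := by
  rw [enorm3_sq]
  simp [w, Mm, Matrix.mulVec, dotProduct, Fin.sum_univ_three]
  linear_combination (1/36*(A 0 1^2 + A 1 1^2 + A 2 1^2)) * h3'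
    + (1/9*(A 0 2^2 + A 1 2^2 + A 2 2^2)) * h6'

lemma edge4 (A : Matrix (Fin 3) (Fin 3) ℝ) :
    enorm3 (A.mulVec (w 4)) ^ 2 - 1 =
      (Mm A 1 1 - 1)/3 + 2*(Mm A 2 2 - 1)/3
        - 2*Real.sqrt 3*Real.sqrt 6/9*(Mm A 1 2) := by
  rw [enorm3_sq]
  simp [w, Mm, Matrix.mulVec, dotProduct, Fin.sum_univ_three]
  linear_combination (1/9*(A 0 1^2 + A 1 1^2 + A 2 1^2)) * h3'
    + (1/9*(A 0 2^2 + A 1 2^2 + A 2 2^2)) * h6'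

lemma w4_eval : w 4 = ![1/2 - 1/2, Real.sqrt 3 / 6 - Real.sqrt 3 / 2, Real.sqrt 6 / 3 - 0] := rfl

lemma w5_eval : w 5 = ![1/2 - 1, Real.sqrt 3 / 6 - 0, Real.sqrt 6 / 3 - 0] := rfl

lemma edge5 (A : Matrix (Fin 3) (Fin 3) ℝ) :
    enorm3 (A.mulVec (w 5)) ^ 2 - 1 =
      (Mm A 0 0 - 1)/4 + (Mm A 1 1 - 1)/12 + 2*(Mm A 2 2 - 1)/3
        - Real.sqrt 3/6*(Mm A 0 1) - Real.sqrt 6/3*(Mm A 0 2)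
        + Real.sqrt 3*Real.sqrt 6/9*(Mm A 1 2) := by
  rw [enorm3_sq, w5_eval]
  simp [Mm, Matrix.mulVec, dotProduct, Fin.sum_univ_three]
  linear_combination (1/36*(A 0 1^2 + A 1 1^2 + A 2 1^2)) * h3'
    + (1/9*(A 0 2^2 + A 1 2^2 + A 2 2^2)) * h6'

lemma frobsq_E (A : Matrix (Fin 3) (Fin 3) ℝ) :
    frobsq (Aᵀ * A - 1) =
      (Mm A 0 0 - 1)^2 + (Mm A 1 1 - 1)^2 + (Mm A 2 2 - 1)^2
        + 2*(Mm A 0 1)^2 + 2*(Mm A 0 2)^2 + 2*(Mm A 1 2)^2 := by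
  simp [frobsq, Mm, Matrix.sub_apply, Matrix.mul_apply, Matrix.transpose_apply,
    Matrix.one_apply, Fin.sum_univ_three]
  ring

lemma frobsq_diag_sum (A : Matrix (Fin 3) (Fin 3) ℝ) :
    frobsq A = Mm A 0 0 + Mm A 1 1 + Mm A 2 2 := by
  simp [frobsq, Mm, Fin.sum_univ_three]
  ring

lemma row_bound (A : Matrix (Fin 3) (Fin 3) ℝ) (v : Fin 3 → ℝ)
    (hv : v 0^2 + v 1^2 + v 2^2 = 1) :
    enorm3 (A.mulVec v) ^ 2 ≤ frobsq A := by
  rw [enorm3_sq]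
  have row : ∀ r0 r1 r2 : ℝ, (r0*v 0 + r1*v 1 + r2*v 2)^2 ≤ r0^2 + r1^2 + r2^2 := by
    intro r0 r1 r2
    have h1 : r0^2 + r1^2 + r2^2 = (r0^2 + r1^2 + r2^2)*(v 0^2 + v 1^2 + v 2^2) := by
      linear_combination (-(r0^2 + r1^2 + r2^2))*hv
    have h2 : (r0^2 + r1^2 + r2^2)*(v 0^2 + v 1^2 + v 2^2) - (r0*v 0 + r1*v 1 + r2*v 2)^2
        = (r0*v 1 - r1*v 0)^2 + (r0*v 2 - r2*v 0)^2 + (r1*v 2 - r2*v 1)^2 := by ring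
    linarith [sq_nonneg (r0*v 1 - r1*v 0), sq_nonneg (r0*v 2 - r2*v 0),
      sq_nonneg (r1*v 2 - r2*v 1)]
  have e : ∑ j, (A.mulVec v j)^2 =
      (A 0 0*v 0 + A 0 1*v 1 + A 0 2*v 2)^2 + (A 1 0*v 0 + A 1 1*v 1 + A 1 2*v 2)^2
        + (A 2 0*v 0 + A 2 1*v 1 + A 2 2*v 2)^2 := by
    simp [Matrix.mulVec, dotProduct, Fin.sum_univ_three]
  have eF : frobsq A = (A 0 0^2 + A 0 1^2 + A 0 2^2) + (A 1 0^2 + A 1 1^2 + A 1 2^2)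
      + (A 2 0^2 + A 2 1^2 + A 2 2^2) := by
    simp [frobsq, Fin.sum_univ_three]
  rw [e, eF]
  have := row (A 0 0) (A 0 1) (A 0 2)
  have := row (A 1 0) (A 1 1) (A 1 2)
  have := row (A 2 0) (A 2 1) (A 2 2)
  linarith

lemma wnorm0 : (w 0 0)^2 + (w 0 1)^2 + (w 0 2)^2 = 1 := by simp [w]
lemma wnorm1 : (w 1 0)^2 + (w 1 1)^2 + (w 1 2)^2 = 1 := by
  simp [w]; linear_combination (1/4)*h3'
lemma wnorm2 : (w 2 0)^2 + (w 2 1)^2 + (w 2 2)^2 = 1 := by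
  simp [w]; linear_combination (1/4)*h3'
lemma wnorm3 : (w 3 0)^2 + (w 3 1)^2 + (w 3 2)^2 = 1 := by
  simp [w]; linear_combination (1/36)*h3' + (1/9)*h6'
lemma wnorm4 : (w 4 0)^2 + (w 4 1)^2 + (w 4 2)^2 = 1 := by
  rw [w4_eval]; simp; linear_combination (1/9)*h3' + (1/9)*h6'
lemma wnorm5 : (w 5 0)^2 + (w 5 1)^2 + (w 5 2)^2 = 1 := by
  rw [w5_eval]; simp; linear_combination (1/36)*h3' + (1/9)*h6'

lemma dist2SO_le (A R : Matrix (Fin 3) (Fin 3) ℝ) (hR : R ∈ SO3) :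
    dist2SO A ≤ frob (A - R)^2 := by
  apply csInf_le
  · exact ⟨0, fun t ht => by obtain ⟨R', -, rfl⟩ := ht; positivity⟩
  · exact ⟨R, hR, rfl⟩

lemma one_mem_SO3 : (1 : Matrix (Fin 3) (Fin 3) ℝ) ∈ SO3 :=
  ⟨(Matrix.mem_orthogonalGroup_iff (Fin 3) ℝ).2 (by simp), Matrix.det_one⟩

lemma frobsq_sub_one_le (A : Matrix (Fin 3) (Fin 3) ℝ) :
    frobsq (A - 1) ≤ 2 * frobsq A + 6 := by
  have e1 : frobsq (A - 1) = (A 0 0 - 1)^2 + (A 0 1)^2 + (A 0 2)^2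
      + (A 1 0)^2 + (A 1 1 - 1)^2 + (A 1 2)^2
      + (A 2 0)^2 + (A 2 1)^2 + (A 2 2 - 1)^2 := by
    simp [frobsq, Matrix.sub_apply, Matrix.one_apply, Fin.sum_univ_three]
    ring
  have e2 : frobsq A = A 0 0^2 + A 0 1^2 + A 0 2^2 + A 1 0^2 + A 1 1^2 + A 1 2^2
      + A 2 0^2 + A 2 1^2 + A 2 2^2 := by
    simp [frobsq, Fin.sum_univ_three]; ring
  rw [e1, e2]
  nlinarith [sq_nonneg (A 0 0 + 1), sq_nonneg (A 1 1 + 1), sq_nonneg (A 2 2 + 1),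
    sq_nonneg (A 0 1), sq_nonneg (A 0 2), sq_nonneg (A 1 0), sq_nonneg (A 1 2),
    sq_nonneg (A 2 0), sq_nonneg (A 2 1)]

set_option maxHeartbeats 1000000 in
/-- Rigidity estimate for the regular tetrahedron: there is `C₁ > 0` such that for every
linear map `A` with `det A > 0`, `dist²(A, SO(3)) ≤ C₁ ∑ᵢ (|A wᵢ| − 1)²`. -/
theorem tetrahedron_rigidity :
    ∃ C₁ > (0 : ℝ), ∀ A : Matrix (Fin 3) (Fin 3) ℝ, A.det > 0 →
      dist2SO A ≤ C₁ * ∑ i : Fin 6, (enorm3 (A.mulVec (w i)) - 1) ^ 2 := by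
  refine ⟨160, by norm_num, ?_⟩
  intro A hdet
  have hq0 := edge0 A
  have hq1 := edge1 A
  have hq2 := edge2 A
  have hq3 := edge3 A
  have hq4 := edge4 A
  have hq5 := edge5 A
  set n : Fin 6 → ℝ := fun i => enorm3 (A.mulVec (w i)) with hn
  have hnn : ∀ i, 0 ≤ n i := fun i => enorm3_nonneg _
  have hSsum : ∑ i : Fin 6, (enorm3 (A.mulVec (w i)) - 1)^2
      = (n 0 - 1)^2 + (n 1 - 1)^2 + (n 2 - 1)^2 + (n 3 - 1)^2 + (n 4 - 1)^2
        + (n 5 - 1)^2 := by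
    rw [Fin.sum_univ_six]
  rw [hSsum]
  set Ssum := (n 0 - 1)^2 + (n 1 - 1)^2 + (n 2 - 1)^2 + (n 3 - 1)^2 + (n 4 - 1)^2
    + (n 5 - 1)^2 with hSs
  have hSnn : 0 ≤ Ssum := by positivity
  rcases le_or_gt (frobsq A) 12 with hF | hF
  · -- small case: use polar decomposition
    obtain ⟨R, hR, hle⟩ := polar A hdet
    have hd : dist2SO A ≤ frob (A - R)^2 := dist2SO_le A R hR
    rw [frob_sq_eq] at hd
    have h8 : frobsq (Aᵀ * A - 1)
        ≤ 8*((n 0^2 - 1)^2 + (n 1^2 - 1)^2 + (n 2^2 - 1)^2 + (n 3^2 - 1)^2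
            + (n 4^2 - 1)^2 + (n 5^2 - 1)^2) := by
      rw [frobsq_E]
      exact qform_bound (Real.sqrt 3) (Real.sqrt 6) (Mm A 0 0 - 1) (Mm A 1 1 - 1)
        (Mm A 2 2 - 1) (Mm A 0 1) (Mm A 0 2) (Mm A 1 2)
        (n 0^2 - 1) (n 1^2 - 1) (n 2^2 - 1) (n 3^2 - 1) (n 4^2 - 1) (n 5^2 - 1)
        h3' h6' hq0 hq1 hq2 hq3 hq4 hq5
    have hrow : ∀ i : Fin 6, n i ^ 2 ≤ 12 := by
      intro i
      have hb : n i ^ 2 ≤ frobsq A := by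
        apply row_bound
        fin_cases i
        exacts [wnorm0, wnorm1, wnorm2, wnorm3, wnorm4, wnorm5]
      linarith
    have hterm : ∀ i : Fin 6, (n i^2 - 1)^2 ≤ 20*(n i - 1)^2 := by
      intro i
      have h1 := hrow i
      have h2 := hnn i
      have h20 : 0 ≤ 20 - (n i + 1)^2 := by nlinarith [sq_nonneg (n i - 7/2)]
      nlinarith [mul_nonneg (sq_nonneg (n i - 1)) h20]
    have := hterm 0; have := hterm 1; have := hterm 2
    have := hterm 3; have := hterm 4; have := hterm 5
    linarith
  · -- large case: use R = 1
    have hd : dist2SO A ≤ frob (A - 1)^2 := dist2SO_le A 1 one_mem_SO3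
    rw [frob_sq_eq] at hd
    have hub := frobsq_sub_one_le A
    have hFd := frobsq_diag_sum A
    have htr : n 0^2 + n 1^2 + n 2^2 + n 3^2 + n 4^2 + n 5^2 = 2 * frobsq A := by
      rw [hFd]; linarith
    have ham : ∀ i : Fin 6, 2*(n i) ≤ n i^2/2 + 2 := by
      intro i; nlinarith [sq_nonneg (n i - 2)]
    have := ham 0; have := ham 1; have := ham 2
    have := ham 3; have := ham 4; have := ham 5
    have hSlb : frobsq A - 6 ≤ Ssum := by
      rw [hSs]; nlinarith
    linarith
end

section
/- There exist α > 0 and c_1 > 12√2 such that whenever a tetrahedron has all edge lengths a_i ∈ (1, 1+α) (i = 1,…,6), we have Σ_{i=1}^6 (a_i − 1) ≤ c_1 · (V(a) − V_1), where V(a) is the volume of the tetrahedron and V_1 = √2/12 is the volume of the regular unit tetrahedron. Consequently also Σ_{i=1}^6 (a_i − 1)² ≤ c_1 · α · (V(a) − V_1). -/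
/-- Cayley–Menger matrix of a tetrahedron with edge lengths
`a 0, a 1, a 2` (the edges meeting at one vertex) and
`a 3, a 4, a 5` (the respectively opposite edges). -/
noncomputable def cmMatrix (a : Fin 6 → ℝ) : Matrix (Fin 5) (Fin 5) ℝ :=
  !![0,      1,      1,      1,      1;
     1,      0,      a 0^2,  a 1^2,  a 2^2;
     1,      a 0^2,  0,      a 5^2,  a 4^2;
     1,      a 1^2,  a 5^2,  0,      a 3^2;
     1,      a 2^2,  a 4^2,  a 3^2,  0]

/-- The volume of a tetrahedron as a function of its six edge lengths,
via the Cayley–Menger determinant: `288 V² = det(CM)`. -/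
noncomputable def tetraVol (a : Fin 6 → ℝ) : ℝ :=
  Real.sqrt ((cmMatrix a).det / 288)


set_option maxHeartbeats 2000000 in
private lemma cm_det_eq (a : Fin 6 → ℝ) : (cmMatrix a).det = 4 + 2*(a 5 ^ 2 - 1) + 2*(a 4 ^ 2 - 1) + 2*(a 3 ^ 2 - 1) + 2*(a 2 ^ 2 - 1) + 2*(a 1 ^ 2 - 1) + 2*(a 0 ^ 2 - 1) - 2*(a 5 ^ 2 - 1)*(a 5 ^ 2 - 1) + 2*(a 4 ^ 2 - 1)*(a 5 ^ 2 - 1) - 2*(a 4 ^ 2 - 1)*(a 4 ^ 2 - 1) + 2*(a 3 ^ 2 - 1)*(a 5 ^ 2 - 1) + 2*(a 3 ^ 2 - 1)*(a 4 ^ 2 - 1) - 2*(a 3 ^ 2 - 1)*(a 3 ^ 2 - 1) + 2*(a 2 ^ 2 - 1)*(a 4 ^ 2 - 1) + 2*(a 2 ^ 2 - 1)*(a 3 ^ 2 - 1) - 2*(a 2 ^ 2 - 1)*(a 2 ^ 2 - 1) + 2*(a 1 ^ 2 - 1)*(a 5 ^ 2 - 1) + 2*(a 1 ^ 2 - 1)*(a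 3 ^ 2 - 1) + 2*(a 1 ^ 2 - 1)*(a 2 ^ 2 - 1) - 2*(a 1 ^ 2 - 1)*(a 1 ^ 2 - 1) + 2*(a 0 ^ 2 - 1)*(a 5 ^ 2 - 1) + 2*(a 0 ^ 2 - 1)*(a 4 ^ 2 - 1) + 2*(a 0 ^ 2 - 1)*(a 2 ^ 2 - 1) + 2*(a 0 ^ 2 - 1)*(a 1 ^ 2 - 1) - 2*(a 0 ^ 2 - 1)*(a 0 ^ 2 - 1) - 2*(a 3 ^ 2 - 1)*(a 4 ^ 2 - 1)*(a 5 ^ 2 - 1) - 2*(a 2 ^ 2 - 1)*(a 5 ^ 2 - 1)*(a 5 ^ 2 - 1) + 2*(a 2 ^ 2 - 1)*(a 4 ^ 2 - 1)*(a 5 ^ 2 - 1) + 2*(a 2 ^ 2 - 1)*(a 3 ^ 2 - 1)*(a 5 ^ 2 - 1) - 2*(a 2 ^ 2 - 1)*(a 2 ^ 2 - 1)*(a 5 ^ 2 - 1) + 2*(a 1 ^ 2 - 1)*(a 4 ^ 2 - 1)*(a 5 ^ 2 - 1) - 2*(a 1 ^ 2 - 1)*(a 4 ^ 2 - 1)*(a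 4 ^ 2 - 1) + 2*(a 1 ^ 2 - 1)*(a 3 ^ 2 - 1)*(a 4 ^ 2 - 1) + 2*(a 1 ^ 2 - 1)*(a 2 ^ 2 - 1)*(a 5 ^ 2 - 1) + 2*(a 1 ^ 2 - 1)*(a 2 ^ 2 - 1)*(a 4 ^ 2 - 1) - 2*(a 1 ^ 2 - 1)*(a 2 ^ 2 - 1)*(a 3 ^ 2 - 1) - 2*(a 1 ^ 2 - 1)*(a 1 ^ 2 - 1)*(a 4 ^ 2 - 1) + 2*(a 0 ^ 2 - 1)*(a 3 ^ 2 - 1)*(a 5 ^ 2 - 1) + 2*(a 0 ^ 2 - 1)*(a 3 ^ 2 - 1)*(a 4 ^ 2 - 1) - 2*(a 0 ^ 2 - 1)*(a 3 ^ 2 - 1)*(a 3 ^ 2 - 1) + 2*(a 0 ^ 2 - 1)*(a 2 ^ 2 - 1)*(a 5 ^ 2 - 1) - 2*(a 0 ^ 2 - 1)*(a 2 ^ 2 - 1)*(a 4 ^ 2 - 1) + 2*(a 0 ^ 2 - 1)*(a 2 ^ 2 - 1)*(a 3 ^ 2 - 1) - 2*(a 0 ^ 2 - 1)*(a 1 ^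 2 - 1)*(a 5 ^ 2 - 1) + 2*(a 0 ^ 2 - 1)*(a 1 ^ 2 - 1)*(a 4 ^ 2 - 1) + 2*(a 0 ^ 2 - 1)*(a 1 ^ 2 - 1)*(a 3 ^ 2 - 1) - 2*(a 0 ^ 2 - 1)*(a 0 ^ 2 - 1)*(a 3 ^ 2 - 1) := by
  simp only [Matrix.det_succ_row_zero, Fin.sum_univ_succ]
  simp [cmMatrix, Fin.succAbove, Fin.lt_def]
  ring

set_option maxHeartbeats 2000000 in
private lemma cm_det_key (a : Fin 6 → ℝ)
    (hp : ∀ i, 0 < a i ^ 2 - 1) (hu : ∀ i, a i ^ 2 - 1 < 1/32) :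
    4 + ((a 0 ^ 2 - 1) + (a 1 ^ 2 - 1) + (a 2 ^ 2 - 1) + (a 3 ^ 2 - 1) + (a 4 ^ 2 - 1) + (a 5 ^ 2 - 1)) ≤ (cmMatrix a).det := by
  rw [cm_det_eq]
  have h1 : 2*(a 5 ^ 2 - 1)*(a 5 ^ 2 - 1) ≤ (1/16) * (a 5 ^ 2 - 1) := by nlinarith [hp 5, hu 5]
  have h2 : (0:ℝ) ≤ 2*(a 4 ^ 2 - 1)*(a 5 ^ 2 - 1) := le_of_lt (by linarith [mul_pos (hp 4) (hp 5)])
  have h3 : 2*(a 4 ^ 2 - 1)*(a 4 ^ 2 - 1) ≤ (1/16) * (a 4 ^ 2 - 1) := by nlinarith [hp 4, hu 4]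
  have h4 : (0:ℝ) ≤ 2*(a 3 ^ 2 - 1)*(a 5 ^ 2 - 1) := le_of_lt (by linarith [mul_pos (hp 3) (hp 5)])
  have h5 : (0:ℝ) ≤ 2*(a 3 ^ 2 - 1)*(a 4 ^ 2 - 1) := le_of_lt (by linarith [mul_pos (hp 3) (hp 4)])
  have h6 : 2*(a 3 ^ 2 - 1)*(a 3 ^ 2 - 1) ≤ (1/16) * (a 3 ^ 2 - 1) := by nlinarith [hp 3, hu 3]
  have h7 : (0:ℝ) ≤ 2*(a 2 ^ 2 - 1)*(a 4 ^ 2 - 1) := le_of_lt (by linarith [mul_pos (hp 2) (hp 4)])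
  have h8 : (0:ℝ) ≤ 2*(a 2 ^ 2 - 1)*(a 3 ^ 2 - 1) := le_of_lt (by linarith [mul_pos (hp 2) (hp 3)])
  have h9 : 2*(a 2 ^ 2 - 1)*(a 2 ^ 2 - 1) ≤ (1/16) * (a 2 ^ 2 - 1) := by nlinarith [hp 2, hu 2]
  have h10 : (0:ℝ) ≤ 2*(a 1 ^ 2 - 1)*(a 5 ^ 2 - 1) := le_of_lt (by linarith [mul_pos (hp 1) (hp 5)])
  have h11 : (0:ℝ) ≤ 2*(a 1 ^ 2 - 1)*(a 3 ^ 2 - 1) := le_of_lt (by linarith [mul_pos (hp 1) (hp 3)])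
  have h12 : (0:ℝ) ≤ 2*(a 1 ^ 2 - 1)*(a 2 ^ 2 - 1) := le_of_lt (by linarith [mul_pos (hp 1) (hp 2)])
  have h13 : 2*(a 1 ^ 2 - 1)*(a 1 ^ 2 - 1) ≤ (1/16) * (a 1 ^ 2 - 1) := by nlinarith [hp 1, hu 1]
  have h14 : (0:ℝ) ≤ 2*(a 0 ^ 2 - 1)*(a 5 ^ 2 - 1) := le_of_lt (by linarith [mul_pos (hp 0) (hp 5)])
  have h15 : (0:ℝ) ≤ 2*(a 0 ^ 2 - 1)*(a 4 ^ 2 - 1) := le_of_lt (by linarith [mul_pos (hp 0) (hp 4)])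
  have h16 : (0:ℝ) ≤ 2*(a 0 ^ 2 - 1)*(a 2 ^ 2 - 1) := le_of_lt (by linarith [mul_pos (hp 0) (hp 2)])
  have h17 : (0:ℝ) ≤ 2*(a 0 ^ 2 - 1)*(a 1 ^ 2 - 1) := le_of_lt (by linarith [mul_pos (hp 0) (hp 1)])
  have h18 : 2*(a 0 ^ 2 - 1)*(a 0 ^ 2 - 1) ≤ (1/16) * (a 0 ^ 2 - 1) := by nlinarith [hp 0, hu 0]
  have h19 : 2*(a 3 ^ 2 - 1)*(a 4 ^ 2 - 1)*(a 5 ^ 2 - 1) ≤ (1/16) * (a 3 ^ 2 - 1) := by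
    have hq : (a 4 ^ 2 - 1)*(a 5 ^ 2 - 1) < 1/32 := by nlinarith [hp 4, hu 4, hp 5, hu 5]
    linarith [mul_le_mul_of_nonneg_left hq.le (hp 3).le]
  have h20 : 2*(a 2 ^ 2 - 1)*(a 5 ^ 2 - 1)*(a 5 ^ 2 - 1) ≤ (1/16) * (a 2 ^ 2 - 1) := by
    have hq : (a 5 ^ 2 - 1)*(a 5 ^ 2 - 1) < 1/32 := by nlinarith [hp 5, hu 5, hp 5, hu 5]
    linarith [mul_le_mul_of_nonneg_left hq.le (hp 2).le]
  have h21 : (0:ℝ) ≤ 2*(a 2 ^ 2 - 1)*(a 4 ^ 2 - 1)*(a 5 ^ 2 - 1) := le_of_lt (by linarith [mul_pos (mul_pos (hp 2) (hp 4)) (hp 5)])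
  have h22 : (0:ℝ) ≤ 2*(a 2 ^ 2 - 1)*(a 3 ^ 2 - 1)*(a 5 ^ 2 - 1) := le_of_lt (by linarith [mul_pos (mul_pos (hp 2) (hp 3)) (hp 5)])
  have h23 : 2*(a 2 ^ 2 - 1)*(a 2 ^ 2 - 1)*(a 5 ^ 2 - 1) ≤ (1/16) * (a 2 ^ 2 - 1) := by
    have hq : (a 2 ^ 2 - 1)*(a 5 ^ 2 - 1) < 1/32 := by nlinarith [hp 2, hu 2, hp 5, hu 5]
    linarith [mul_le_mul_of_nonneg_left hq.le (hp 2).le]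
  have h24 : (0:ℝ) ≤ 2*(a 1 ^ 2 - 1)*(a 4 ^ 2 - 1)*(a 5 ^ 2 - 1) := le_of_lt (by linarith [mul_pos (mul_pos (hp 1) (hp 4)) (hp 5)])
  have h25 : 2*(a 1 ^ 2 - 1)*(a 4 ^ 2 - 1)*(a 4 ^ 2 - 1) ≤ (1/16) * (a 1 ^ 2 - 1) := by
    have hq : (a 4 ^ 2 - 1)*(a 4 ^ 2 - 1) < 1/32 := by nlinarith [hp 4, hu 4, hp 4, hu 4]
    linarith [mul_le_mul_of_nonneg_left hq.le (hp 1).le]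
  have h26 : (0:ℝ) ≤ 2*(a 1 ^ 2 - 1)*(a 3 ^ 2 - 1)*(a 4 ^ 2 - 1) := le_of_lt (by linarith [mul_pos (mul_pos (hp 1) (hp 3)) (hp 4)])
  have h27 : (0:ℝ) ≤ 2*(a 1 ^ 2 - 1)*(a 2 ^ 2 - 1)*(a 5 ^ 2 - 1) := le_of_lt (by linarith [mul_pos (mul_pos (hp 1) (hp 2)) (hp 5)])
  have h28 : (0:ℝ) ≤ 2*(a 1 ^ 2 - 1)*(a 2 ^ 2 - 1)*(a 4 ^ 2 - 1) := le_of_lt (by linarith [mul_pos (mul_pos (hp 1) (hp 2)) (hp 4)])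
  have h29 : 2*(a 1 ^ 2 - 1)*(a 2 ^ 2 - 1)*(a 3 ^ 2 - 1) ≤ (1/16) * (a 1 ^ 2 - 1) := by
    have hq : (a 2 ^ 2 - 1)*(a 3 ^ 2 - 1) < 1/32 := by nlinarith [hp 2, hu 2, hp 3, hu 3]
    linarith [mul_le_mul_of_nonneg_left hq.le (hp 1).le]
  have h30 : 2*(a 1 ^ 2 - 1)*(a 1 ^ 2 - 1)*(a 4 ^ 2 - 1) ≤ (1/16) * (a 1 ^ 2 - 1) := by
    have hq : (a 1 ^ 2 - 1)*(a 4 ^ 2 - 1) < 1/32 := by nlinarith [hp 1, hu 1, hp 4, hu 4]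
    linarith [mul_le_mul_of_nonneg_left hq.le (hp 1).le]
  have h31 : (0:ℝ) ≤ 2*(a 0 ^ 2 - 1)*(a 3 ^ 2 - 1)*(a 5 ^ 2 - 1) := le_of_lt (by linarith [mul_pos (mul_pos (hp 0) (hp 3)) (hp 5)])
  have h32 : (0:ℝ) ≤ 2*(a 0 ^ 2 - 1)*(a 3 ^ 2 - 1)*(a 4 ^ 2 - 1) := le_of_lt (by linarith [mul_pos (mul_pos (hp 0) (hp 3)) (hp 4)])
  have h33 : 2*(a 0 ^ 2 - 1)*(a 3 ^ 2 - 1)*(a 3 ^ 2 - 1) ≤ (1/16) * (a 0 ^ 2 - 1) := by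
    have hq : (a 3 ^ 2 - 1)*(a 3 ^ 2 - 1) < 1/32 := by nlinarith [hp 3, hu 3, hp 3, hu 3]
    linarith [mul_le_mul_of_nonneg_left hq.le (hp 0).le]
  have h34 : (0:ℝ) ≤ 2*(a 0 ^ 2 - 1)*(a 2 ^ 2 - 1)*(a 5 ^ 2 - 1) := le_of_lt (by linarith [mul_pos (mul_pos (hp 0) (hp 2)) (hp 5)])
  have h35 : 2*(a 0 ^ 2 - 1)*(a 2 ^ 2 - 1)*(a 4 ^ 2 - 1) ≤ (1/16) * (a 0 ^ 2 - 1) := by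
    have hq : (a 2 ^ 2 - 1)*(a 4 ^ 2 - 1) < 1/32 := by nlinarith [hp 2, hu 2, hp 4, hu 4]
    linarith [mul_le_mul_of_nonneg_left hq.le (hp 0).le]
  have h36 : (0:ℝ) ≤ 2*(a 0 ^ 2 - 1)*(a 2 ^ 2 - 1)*(a 3 ^ 2 - 1) := le_of_lt (by linarith [mul_pos (mul_pos (hp 0) (hp 2)) (hp 3)])
  have h37 : 2*(a 0 ^ 2 - 1)*(a 1 ^ 2 - 1)*(a 5 ^ 2 - 1) ≤ (1/16) * (a 0 ^ 2 - 1) := by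
    have hq : (a 1 ^ 2 - 1)*(a 5 ^ 2 - 1) < 1/32 := by nlinarith [hp 1, hu 1, hp 5, hu 5]
    linarith [mul_le_mul_of_nonneg_left hq.le (hp 0).le]
  have h38 : (0:ℝ) ≤ 2*(a 0 ^ 2 - 1)*(a 1 ^ 2 - 1)*(a 4 ^ 2 - 1) := le_of_lt (by linarith [mul_pos (mul_pos (hp 0) (hp 1)) (hp 4)])
  have h39 : (0:ℝ) ≤ 2*(a 0 ^ 2 - 1)*(a 1 ^ 2 - 1)*(a 3 ^ 2 - 1) := le_of_lt (by linarith [mul_pos (mul_pos (hp 0) (hp 1)) (hp 3)])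
  have h40 : 2*(a 0 ^ 2 - 1)*(a 0 ^ 2 - 1)*(a 3 ^ 2 - 1) ≤ (1/16) * (a 0 ^ 2 - 1) := by
    have hq : (a 0 ^ 2 - 1)*(a 3 ^ 2 - 1) < 1/32 := by nlinarith [hp 0, hu 0, hp 3, hu 3]
    linarith [mul_le_mul_of_nonneg_left hq.le (hp 0).le]
  have e0 := hp 0; have e1 := hp 1; have e2 := hp 2
  have e3 := hp 3; have e4 := hp 4; have e5 := hp 5
  linarith [h1, h2, h3, h4, h5, h6, h7, h8, h9, h10, h11, h12, h13, h14, h15, h16, h17, h18, h19, h20, h21, h22, h23, h24, h25, h26, h27, h28, h29, h30, h31, h32, h33, h34, h35, h36, h37, h38, h39, h40]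

set_option maxHeartbeats 1000000 in
/-- There exist `α > 0` and `c₁ > 12√2` such that for a tetrahedron with all edge
lengths in `(1, 1+α)`, the sum of edge length excesses is bounded by `c₁` times the
volume excess over the regular unit tetrahedron (of volume `√2/12`), and consequently
the sum of squared excesses is bounded by `c₁ α` times the volume excess. -/

theorem tetra_edge_excess_vs_volume_excess :
    ∃ α > (0 : ℝ), ∃ c₁ > 12 * Real.sqrt 2,
      ∀ a : Fin 6 → ℝ, (∀ i, a i ∈ Set.Ioo (1 : ℝ) (1 + α)) →
        (∑ i, (a i - 1)) ≤ c₁ * (tetraVol a - Real.sqrt 2 / 12) ∧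
        (∑ i, (a i - 1) ^ 2) ≤ c₁ * α * (tetraVol a - Real.sqrt 2 / 12) := by
  have hs2 : Real.sqrt 2 < 1.415 := by
    nlinarith [Real.sq_sqrt (by norm_num : (0:ℝ) ≤ 2), Real.sqrt_nonneg 2]
  refine ⟨1/100, by norm_num, 100, by nlinarith, ?_⟩
  intro a ha
  have hp : ∀ i, 0 < a i ^ 2 - 1 := fun i => by
    have h := ha i; rw [Set.mem_Ioo] at h; nlinarith [h.1, h.2]
  have hu : ∀ i, a i ^ 2 - 1 < 1/32 := fun i => by
    have h := ha i; rw [Set.mem_Ioo] at h; nlinarith [h.1, h.2]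
  set S : ℝ := (a 0 ^ 2 - 1) + (a 1 ^ 2 - 1) + (a 2 ^ 2 - 1) + (a 3 ^ 2 - 1) + (a 4 ^ 2 - 1) + (a 5 ^ 2 - 1) with hS
  have key : 4 + S ≤ (cmMatrix a).det := cm_det_key a hp hu
  have hSpos : 0 < S := by
    have := hp 0; have := hp 1; have := hp 2; have := hp 3; have := hp 4; have := hp 5
    rw [hS]; linarith
  have hSle : S ≤ 6/32 := by
    have := hu 0; have := hu 1; have := hu 2; have := hu 3; have := hu 4; have := hu 5
    rw [hS]; linarith
  have hvol : Real.sqrt 2 / 12 + S / 72 ≤ tetraVol a := by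
    have h0 : (0:ℝ) ≤ Real.sqrt 2 / 12 + S / 72 := by positivity
    have hsq : (Real.sqrt 2 / 12 + S / 72) ^ 2 ≤ (cmMatrix a).det / 288 := by
      have h2 : (Real.sqrt 2) ^ 2 = 2 := Real.sq_sqrt (by norm_num)
      have hb : (Real.sqrt 2 / 12 + S / 72) ^ 2 ≤ (4 + S) / 288 := by
        nlinarith [hSpos, hSle, hs2, Real.sqrt_nonneg 2]
      linarith [key, hb]
    calc Real.sqrt 2 / 12 + S / 72 = Real.sqrt ((Real.sqrt 2 / 12 + S / 72) ^ 2) :=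
          (Real.sqrt_sq h0).symm
      _ ≤ Real.sqrt ((cmMatrix a).det / 288) := Real.sqrt_le_sqrt hsq
      _ = tetraVol a := rfl
  have hVpos : 0 ≤ tetraVol a - Real.sqrt 2 / 12 := by linarith
  have hsum : (∑ i, (a i - 1)) ≤ S / 2 := by
    have k : ∀ i : Fin 6, a i - 1 ≤ (a i ^ 2 - 1) / 2 := fun i => by
      have h := ha i; rw [Set.mem_Ioo] at h; nlinarith [h.1]
    have := k 0; have := k 1; have := k 2; have := k 3; have := k 4; have := k 5
    rw [hS, Fin.sum_univ_six]
    linarith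
  constructor
  · linarith [hsum, hvol, hVpos]
  · have hsq2 : (∑ i, (a i - 1) ^ 2) ≤ (1/100) * (∑ i, (a i - 1)) := by
      have k : ∀ i : Fin 6, (a i - 1) ^ 2 ≤ (1/100) * (a i - 1) := fun i => by
        have h := ha i; rw [Set.mem_Ioo] at h; nlinarith [h.1, h.2]
      rw [Fin.sum_univ_six, Fin.sum_univ_six]
      have := k 0; have := k 1; have := k 2; have := k 3; have := k 4; have := k 5
      linarith
    have hsum2 : (0:ℝ) ≤ (∑ i, (a i - 1)) := by
      have k : ∀ i : Fin 6, (0:ℝ) ≤ a i - 1 := fun i => by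
        have h := ha i; rw [Set.mem_Ioo] at h; linarith [h.1]
      rw [Fin.sum_univ_six]
      have := k 0; have := k 1; have := k 2; have := k 3; have := k 4; have := k 5
      linarith
    nlinarith [hsq2, hsum, hvol, hVpos, hsum2]
end

section
/- Let f: ℝ² → ℝ² be continuous and piecewise affine with respect to a locally finite triangulation of ℝ², and suppose that on every triangle the (constant) Jacobian A satisfies ⟨v, A v⟩ > 0 for all v ≠ 0. Then f is injective: for x ≠ y, the piecewise linear curve t ↦ f(ty + (1−t)x), whose derivative at every differentiable point forms an acute angle with y − x, satisfies f(x) ≠ f(y). -/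
open Matrix

/-- A continuous real function which, at every point, is affine with a positive
slope on a small interval to the right, is strictly monotone. -/
private lemma aux_strictMono (φ : ℝ → ℝ) (hc : Continuous φ)
    (h : ∀ t : ℝ, ∃ δ > 0, ∃ c > 0, ∀ s ∈ Set.Icc t (t + δ), φ s = φ t + c * (s - t)) :
    StrictMono φ := by
  have weak : ∀ a b : ℝ, a ≤ b → φ a ≤ φ b := by
    intro a b hab
    set S := {s : ℝ | s ∈ Set.Icc a b ∧ ∀ u ∈ Set.Icc a s, φ a ≤ φ u} with hS
    have haS : a ∈ S := by
      refine ⟨⟨le_refl a, hab⟩, fun u hu => ?_⟩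
      have : u = a := le_antisymm hu.2 hu.1
      simp [this]
    have hbdd : BddAbove S := ⟨b, fun s hs => hs.1.2⟩
    set m := sSup S with hm
    have hmS1 : a ≤ m := le_csSup hbdd haS
    have hmb : m ≤ b := csSup_le ⟨a, haS⟩ (fun s hs => hs.1.2)
    have hlt : ∀ u, a ≤ u → u < m → φ a ≤ φ u := by
      intro u hau hum
      obtain ⟨s, hsS, hus⟩ := exists_lt_of_lt_csSup ⟨a, haS⟩ hum
      exact hsS.2 u ⟨hau, le_of_lt hus⟩
    have hφm : φ a ≤ φ m := by
      rcases eq_or_lt_of_le hmS1 with he | hlt'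
      · rw [← he]
      · have htend : Filter.Tendsto φ (nhdsWithin m (Set.Iio m)) (nhds (φ m)) :=
          (hc.continuousAt).continuousWithinAt
        refine ge_of_tendsto htend ?_
        filter_upwards [Ioo_mem_nhdsLT_of_mem ⟨hlt', le_refl m⟩] with u hu
        exact hlt u (le_of_lt hu.1) hu.2
    have hmS : m ∈ S := by
      refine ⟨⟨hmS1, hmb⟩, fun u hu => ?_⟩
      rcases eq_or_lt_of_le hu.2 with he | hlt'
      · rw [he]; exact hφm
      · exact hlt u hu.1 hlt'
    have hmeq : m = b := by
      by_contra hne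
      have hmb' : m < b := lt_of_le_of_ne hmb hne
      obtain ⟨δ, hδ, c, hcpos, heq⟩ := h m
      set m' := min (m + δ) b with hm'
      have hmm' : m < m' := lt_min (by linarith) hmb'
      have hm'S : m' ∈ S := by
        refine ⟨⟨le_trans hmS1 (le_of_lt hmm'), min_le_right _ _⟩, fun u hu => ?_⟩
        rcases le_or_gt u m with h1 | h1
        · exact hmS.2 u ⟨hu.1, h1⟩
        · have hu2 : u ∈ Set.Icc m (m + δ) :=
            ⟨le_of_lt h1, le_trans hu.2 (min_le_left _ _)⟩
          have := heq u hu2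
          nlinarith
      exact absurd (le_csSup hbdd hm'S) (not_le.mpr hmm')
    rw [← hmeq]; exact hφm
  intro a b hab
  obtain ⟨δ, hδ, c, hcpos, heq⟩ := h a
  set s' := min (a + δ) b with hs'
  have h1 : a < s' := lt_min (by linarith) hab
  have h2 : φ a < φ s' := by
    have := heq s' ⟨le_of_lt h1, min_le_left _ _⟩
    nlinarith
  exact lt_of_lt_of_le h2 (weak s' b (min_le_right _ _))

/-- A continuous map `f : ℝ² → ℝ²` which is piecewise affine with respect to a
locally finite triangulation of ℝ², such that on every triangle the constant Jacobian
`A` satisfies `⟨v, A v⟩ > 0` for all `v ≠ 0`, is injective. -/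
theorem piecewise_affine_injective
    (f : (Fin 2 → ℝ) → (Fin 2 → ℝ)) (hf : Continuous f)
    (T : Set (Set (Fin 2 → ℝ)))
    (hcov : ⋃₀ T = Set.univ)
    (hlf : LocallyFinite (fun s : T => (s : Set (Fin 2 → ℝ))))
    (htri : ∀ s ∈ T, ∃ p q r : Fin 2 → ℝ,
      s = convexHull ℝ {p, q, r} ∧ (interior s).Nonempty)
    (haff : ∀ s ∈ T, ∃ (A : Matrix (Fin 2) (Fin 2) ℝ) (b : Fin 2 → ℝ),
      (∀ v : Fin 2 → ℝ, v ≠ 0 → 0 < v ⬝ᵥ A.mulVec v) ∧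
      ∀ x ∈ s, f x = A.mulVec x + b) :
    Function.Injective f := by
  have hclosed : ∀ s ∈ T, IsClosed s := by
    intro s hs
    obtain ⟨p, q, r, hspqr, -⟩ := htri s hs
    rw [hspqr]
    exact ((Set.toFinite ({p, q, r} : Set (Fin 2 → ℝ))).isCompact_convexHull ℝ).isClosed
  have hconv : ∀ s ∈ T, Convex ℝ s := by
    intro s hs
    obtain ⟨p, q, r, hspqr, -⟩ := htri s hs
    rw [hspqr]
    exact convex_convexHull ℝ _
  intro x y hxy
  by_contra hne
  set v := y - x with hv
  have hv0 : v ≠ 0 := sub_ne_zero.mpr fun h => hne h.symm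
  set γ : ℝ → (Fin 2 → ℝ) := fun t => x + t • v with hγ
  have hγcont : Continuous γ := by
    exact continuous_const.add (continuous_id.smul continuous_const)
  set φ : ℝ → ℝ := fun t => f (γ t) ⬝ᵥ v with hφ
  have hdot : Continuous fun w : Fin 2 → ℝ => w ⬝ᵥ v := by
    simp only [dotProduct]
    exact continuous_finset_sum _ fun i _ => ((continuous_apply i).mul continuous_const)
  have hφcont : Continuous φ := hdot.comp (hf.comp hγcont)
  have key : ∀ t : ℝ, ∃ δ > 0, ∃ c > 0, ∀ s ∈ Set.Icc t (t + δ),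
      φ s = φ t + c * (s - t) := by
    intro t
    obtain ⟨U, hU, hUfin⟩ := hlf (γ t)
    set Bad : Set T := {i : T | ((i : Set (Fin 2 → ℝ)) ∩ U).Nonempty ∧
      γ t ∉ (i : Set (Fin 2 → ℝ))} with hBad
    have hBadfin : Bad.Finite := hUfin.subset (fun i hi => hi.1)
    set V : Set (Fin 2 → ℝ) := U ∩ ⋂ i ∈ Bad, (↑i : Set (Fin 2 → ℝ))ᶜ with hV
    have hVnhds : V ∈ nhds (γ t) := by
      refine Filter.inter_mem hU ?_
      refine (Filter.biInter_mem hBadfin).mpr fun i hi => ?_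
      exact (hclosed ↑i i.2).isOpen_compl.mem_nhds hi.2
    obtain ⟨δ, hδpos, hδmem⟩ : ∃ δ > 0, ∀ s ∈ Set.Icc t (t + δ), γ s ∈ V := by
      have hpre : γ ⁻¹' V ∈ nhds t := hγcont.continuousAt.preimage_mem_nhds hVnhds
      obtain ⟨ε, hε, hball⟩ := Metric.mem_nhds_iff.mp hpre
      refine ⟨ε / 2, by linarith, fun s hs => hball ?_⟩
      have : |s - t| < ε := by
        rw [abs_sub_lt_iff]; constructor <;> [linarith [hs.1, hs.2]; linarith [hs.1]]
      simpa [Metric.mem_ball, Real.dist_eq] using this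
    have hqV : γ (t + δ) ∈ V := hδmem _ ⟨by linarith, le_refl _⟩
    have hqU : γ (t + δ) ∈ U := hqV.1
    obtain ⟨s0, hs0T, hqs0⟩ : ∃ s0 ∈ T, γ (t + δ) ∈ s0 := by
      have : γ (t + δ) ∈ ⋃₀ T := by rw [hcov]; exact Set.mem_univ _
      exact this
    have hts0 : γ t ∈ s0 := by
      by_contra hts0
      have hiBad : (⟨s0, hs0T⟩ : T) ∈ Bad := ⟨⟨γ (t + δ), hqs0, hqU⟩, hts0⟩
      have := hqV.2
      rw [Set.mem_iInter₂] at this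
      exact this _ hiBad hqs0
    have hseg : ∀ s ∈ Set.Icc t (t + δ), γ s ∈ s0 := by
      intro s hs
      have hθ0 : 0 ≤ (s - t) / δ := div_nonneg (by linarith [hs.1]) (le_of_lt hδpos)
      have hθ1 : (s - t) / δ ≤ 1 := by
        rw [div_le_one hδpos]; linarith [hs.2]
      have h1 : γ s = (1 - (s - t) / δ) • γ t + ((s - t) / δ) • γ (t + δ) := by
        funext i
        simp only [hγ, Pi.add_apply, Pi.smul_apply, smul_eq_mul]
        field_simp
        ring
      rw [h1]
      exact hconv s0 hs0T hts0 hqs0 (by linarith) hθ0 (by ring)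
    obtain ⟨A, b, hApos, hAeq⟩ := haff s0 hs0T
    refine ⟨δ, hδpos, v ⬝ᵥ A.mulVec v, hApos v hv0, fun s hs => ?_⟩
    have h2 : γ s = γ t + (s - t) • v := by
      funext i
      simp only [hγ, Pi.add_apply, Pi.smul_apply, smul_eq_mul]
      ring
    have hft : f (γ t) = A.mulVec (γ t) + b := hAeq _ hts0
    have hfs : f (γ s) = A.mulVec (γ s) + b := hAeq _ (hseg s hs)
    simp only [hφ]
    rw [hfs, hft, h2, Matrix.mulVec_add, Matrix.mulVec_smul]
    rw [add_dotProduct, add_dotProduct, add_dotProduct,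
      smul_dotProduct, smul_eq_mul, dotProduct_comm v (A.mulVec v)]
    ring
  have hmono := aux_strictMono φ hφcont key
  have h01 : φ 0 < φ 1 := hmono zero_lt_one
  have heq01 : φ 0 = φ 1 := by
    have h0 : γ 0 = x := by
      funext i; simp [hγ]
    have h1 : γ 1 = y := by
      funext i; simp [hγ, hv]
    rw [hφ]
    simp only [h0, h1, hxy]
  linarith
end

section
/- For α ∈ (0, √3 − 1), the area of a Euclidean triangle with all three side lengths in the interval [1, 1 + α] is uniquely minimized by the equilateral triangle with side length 1, whose area is √3/4. Moreover, at the equilateral unit triangle, each partial derivative of the area with respect to a side length equals 1/(2√3) > 0. -/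
/-- The area of a triangle with side lengths `a, b, c` by Heron's formula. -/
noncomputable def heronArea (a b c : ℝ) : ℝ :=
  Real.sqrt ((a + b + c) * (-a + b + c) * (a - b + c) * (a + b - c)) / 4

lemma heron_Q_ge (u v w : ℝ) (hu1 : 1 ≤ u) (hu3 : u ≤ 3) (hv1 : 1 ≤ v) (hv3 : v ≤ 3)
    (hw1 : 1 ≤ w) (hw3 : w ≤ 3) :
    3 ≤ 2*u*v + 2*v*w + 2*w*u - u^2 - v^2 - w^2 := by
  nlinarith [mul_nonneg (sub_nonneg.2 hu1) (sub_nonneg.2 hv1),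
    mul_nonneg (sub_nonneg.2 hv1) (sub_nonneg.2 hw1),
    mul_nonneg (sub_nonneg.2 hw1) (sub_nonneg.2 hu1),
    mul_nonneg (sub_nonneg.2 hu3) (sub_nonneg.2 hv1),
    mul_nonneg (sub_nonneg.2 hv3) (sub_nonneg.2 hw1),
    mul_nonneg (sub_nonneg.2 hw3) (sub_nonneg.2 hu1),
    mul_nonneg (sub_nonneg.2 hu1) (sub_nonneg.2 hv3),
    mul_nonneg (sub_nonneg.2 hv1) (sub_nonneg.2 hw3),
    mul_nonneg (sub_nonneg.2 hw1) (sub_nonneg.2 hu3),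
    mul_nonneg (sub_nonneg.2 hu3) (sub_nonneg.2 hv3),
    mul_nonneg (sub_nonneg.2 hv3) (sub_nonneg.2 hw3),
    mul_nonneg (sub_nonneg.2 hw3) (sub_nonneg.2 hu3)]

lemma heron_Q_gt (u v w : ℝ) (hu1 : 1 < u) (hu3 : u < 3) (hv1 : 1 ≤ v) (hv3 : v ≤ 3)
    (hw1 : 1 ≤ w) (hw3 : w ≤ 3) :
    3 < 2*u*v + 2*v*w + 2*w*u - u^2 - v^2 - w^2 := by
  nlinarith [mul_nonneg (sub_nonneg.2 hv1) (sub_nonneg.2 hw1),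
    mul_nonneg (sub_nonneg.2 hv3) (sub_nonneg.2 hw1),
    mul_nonneg (sub_nonneg.2 hv1) (sub_nonneg.2 hw3),
    mul_nonneg (sub_nonneg.2 hv3) (sub_nonneg.2 hw3),
    mul_pos (sub_pos.2 hu1) (sub_pos.2 hu3),
    mul_nonneg (mul_nonneg (sub_pos.2 hu1).le (sub_pos.2 hu3).le) (sub_nonneg.2 hv1),
    mul_nonneg (mul_nonneg (sub_pos.2 hu1).le (sub_pos.2 hu3).le) (sub_nonneg.2 hw1),
    mul_nonneg (mul_nonneg (sub_pos.2 hu1).le (sub_pos.2 hu3).le) (sub_nonneg.2 hv3),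
    mul_nonneg (mul_nonneg (sub_pos.2 hu1).le (sub_pos.2 hu3).le) (sub_nonneg.2 hw3)]

set_option maxHeartbeats 1000000 in
lemma heron_deriv : HasFDerivAt (fun v : Fin 3 → ℝ => heronArea (v 0) (v 1) (v 2))
    ((1 / (2 * Real.sqrt 3)) • (∑ i : Fin 3, ContinuousLinearMap.proj i :
      (Fin 3 → ℝ) →L[ℝ] ℝ)) (fun _ => 1) := by
  have hp0 : HasFDerivAt (fun v : Fin 3 → ℝ => v 0)
      (ContinuousLinearMap.proj 0 : (Fin 3 → ℝ) →L[ℝ] ℝ) (fun _ => 1) :=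
    (ContinuousLinearMap.proj 0 : (Fin 3 → ℝ) →L[ℝ] ℝ).hasFDerivAt
  have hp1 : HasFDerivAt (fun v : Fin 3 → ℝ => v 1)
      (ContinuousLinearMap.proj 1 : (Fin 3 → ℝ) →L[ℝ] ℝ) (fun _ => 1) :=
    (ContinuousLinearMap.proj 1 : (Fin 3 → ℝ) →L[ℝ] ℝ).hasFDerivAt
  have hp2 : HasFDerivAt (fun v : Fin 3 → ℝ => v 2)
      (ContinuousLinearMap.proj 2 : (Fin 3 → ℝ) →L[ℝ] ℝ) (fun _ => 1) :=
    (ContinuousLinearMap.proj 2 : (Fin 3 → ℝ) →L[ℝ] ℝ).hasFDerivAt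
  have h1 := (hp0.add hp1).add hp2
  have h2 := ((hp0.neg).add hp1).add hp2
  have h3' := (hp0.sub hp1).add hp2
  have h4 := (hp0.add hp1).sub hp2
  have hg := ((h1.mul h2).mul h3').mul h4
  have hgne : ((fun v : Fin 3 → ℝ => (v 0 + v 1 + v 2) * (-v 0 + v 1 + v 2)
      * (v 0 - v 1 + v 2) * (v 0 + v 1 - v 2)) (fun _ => 1)) ≠ 0 := by norm_num
  have hsq' := hg.sqrt hgne
  have heq : (fun v : Fin 3 → ℝ => heronArea (v 0) (v 1) (v 2))
      = fun v : Fin 3 → ℝ => (1/4 : ℝ) * Real.sqrt ((v 0 + v 1 + v 2) * (-v 0 + v 1 + v 2)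
        * (v 0 - v 1 + v 2) * (v 0 + v 1 - v 2)) := by
    funext v; simp only [heronArea]; ring
  rw [heq]
  have hfinal := hsq'.const_mul (1/4 : ℝ)
  convert hfinal using 1
  iterate 5 rfl
  · funext x; simp only [Pi.mul_apply, Pi.add_apply, Pi.sub_apply, Pi.neg_apply]
  have hs : Real.sqrt (((1:ℝ)+1+1) * (-1+1+1) * (1-1+1) * (1+1-1)) = Real.sqrt 3 := by norm_num
  ext x
  simp only [ContinuousLinearMap.smul_apply, ContinuousLinearMap.add_apply,
    ContinuousLinearMap.coe_sum', Finset.sum_apply, ContinuousLinearMap.proj_apply,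
    ContinuousLinearMap.neg_apply, ContinuousLinearMap.sub_apply, smul_eq_mul,
    Fin.sum_univ_three]
  norm_num [hs]
  ring

/-- For `α ∈ (0, √3 − 1)`, the area of a triangle with all side lengths in
`[1, 1+α]` is uniquely minimized by the equilateral unit triangle (area `√3/4`),
and at the equilateral unit triangle each partial derivative of the area with
respect to a side length equals `1/(2√3) > 0`. -/
theorem heron_area_min_and_derivative
    (α : ℝ) (hα : α ∈ Set.Ioo (0 : ℝ) (Real.sqrt 3 - 1)) :
    (∀ a b c : ℝ, a ∈ Set.Icc 1 (1 + α) → b ∈ Set.Icc 1 (1 + α) →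
      c ∈ Set.Icc 1 (1 + α) → Real.sqrt 3 / 4 ≤ heronArea a b c) ∧
    (∀ a b c : ℝ, a ∈ Set.Icc 1 (1 + α) → b ∈ Set.Icc 1 (1 + α) →
      c ∈ Set.Icc 1 (1 + α) → heronArea a b c = Real.sqrt 3 / 4 →
      a = 1 ∧ b = 1 ∧ c = 1) ∧
    HasFDerivAt (fun v : Fin 3 → ℝ => heronArea (v 0) (v 1) (v 2))
      ((1 / (2 * Real.sqrt 3)) • (∑ i : Fin 3, ContinuousLinearMap.proj i :
        (Fin 3 → ℝ) →L[ℝ] ℝ)) (fun _ => 1) ∧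
    0 < 1 / (2 * Real.sqrt 3) := by
  obtain ⟨hα0, hα1⟩ := hα
  have hs3 : Real.sqrt 3 ^ 2 = 3 := Real.sq_sqrt (by norm_num)
  have hs3pos : 0 < Real.sqrt 3 := Real.sqrt_pos.2 (by norm_num)
  have hsq : ∀ x : ℝ, x ∈ Set.Icc 1 (1 + α) → 1 ≤ x ^ 2 ∧ x ^ 2 < 3 := by
    intro x ⟨hx1, hx2⟩
    refine ⟨by nlinarith, ?_⟩
    have hx : x < Real.sqrt 3 := by linarith
    calc x ^ 2 < Real.sqrt 3 ^ 2 := by nlinarith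
      _ = 3 := hs3
  have hPge : ∀ a b c : ℝ, a ∈ Set.Icc 1 (1 + α) → b ∈ Set.Icc 1 (1 + α) →
      c ∈ Set.Icc 1 (1 + α) → 3 ≤ (a + b + c) * (-a + b + c) * (a - b + c) * (a + b - c) := by
    intro a b c ha hb hc
    obtain ⟨ha1, ha3⟩ := hsq a ha
    obtain ⟨hb1, hb3⟩ := hsq b hb
    obtain ⟨hc1, hc3⟩ := hsq c hc
    have := heron_Q_ge (a^2) (b^2) (c^2) ha1 ha3.le hb1 hb3.le hc1 hc3.le
    nlinarith [this]
  refine ⟨?_, ?_, heron_deriv, by positivity⟩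
  · intro a b c ha hb hc
    have hP := hPge a b c ha hb hc
    unfold heronArea
    have : Real.sqrt 3 ≤ Real.sqrt ((a + b + c) * (-a + b + c) * (a - b + c) * (a + b - c)) :=
      Real.sqrt_le_sqrt hP
    linarith
  · intro a b c ha hb hc heq
    have hP := hPge a b c ha hb hc
    unfold heronArea at heq
    have hPeq : (a + b + c) * (-a + b + c) * (a - b + c) * (a + b - c) = 3 := by
      have h1 : Real.sqrt ((a + b + c) * (-a + b + c) * (a - b + c) * (a + b - c))
          = Real.sqrt 3 := by linarith
      nlinarith [Real.sq_sqrt (show (0:ℝ) ≤ (a + b + c) * (-a + b + c) * (a - b + c) * (a + b - c)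
        by linarith), hs3, h1]
    obtain ⟨ha1, ha3⟩ := hsq a ha
    obtain ⟨hb1, hb3⟩ := hsq b hb
    obtain ⟨hc1, hc3⟩ := hsq c hc
    have ha' : a = 1 := by
      by_contra h
      have h1 : 1 < a := lt_of_le_of_ne ha.1 (Ne.symm h)
      have := heron_Q_gt (a^2) (b^2) (c^2) (by nlinarith) ha3 hb1 hb3.le hc1 hc3.le
      nlinarith [this]
    have hb' : b = 1 := by
      by_contra h
      have h1 : 1 < b := lt_of_le_of_ne hb.1 (Ne.symm h)
      have := heron_Q_gt (b^2) (a^2) (c^2) (by nlinarith) hb3 ha1 ha3.le hc1 hc3.le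
      nlinarith [this]
    have hc' : c = 1 := by
      by_contra h
      have h1 : 1 < c := lt_of_le_of_ne hc.1 (Ne.symm h)
      have := heron_Q_gt (c^2) (a^2) (b^2) (by nlinarith) hc3 ha1 ha3.le hb1 hb3.le
      nlinarith [this]
    exact ⟨ha', hb', hc'⟩
end

section
/- Let X ⊂ ℝ² be a locally finite point set with pairwise distances > 1 such that every point has exactly six points of X in its open annulus of radii 1 and 1+α, with α > 0 small enough. Then the graph K(X) on vertex set X with edges between points at distance in (1, 1+α) is connected. -/
open Complex

/- Auxiliary lemmas -/

/-- Lower bound for `cos 0.9`. -/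
lemma cos_nine_tenths_ge : (0.55 : ℝ) ≤ Real.cos 0.9 := by
  have h := Real.cos_bound (x := 0.9) (by rw [_root_.abs_of_nonneg] <;> norm_num)
  rw [abs_sub_le_iff] at h
  have h1 := h.2
  rw [_root_.abs_of_nonneg (by norm_num : (0:ℝ) ≤ 0.9)] at h1
  nlinarith [h1]

/-- Law of cosines identity in ℂ. -/
lemma law_of_cos (w w' : ℂ) :
    (‖w - w'‖)^2 = (‖w‖)^2 + (‖w'‖)^2
      - 2 * (w * (starRingEnd ℂ) w').re := by
  simp only [Complex.sq_norm]
  exact Complex.normSq_sub w w'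

/-- cosine of the difference of arguments. -/
lemma cos_arg_sub (a b : ℂ) (ha : a ≠ 0) (hb : b ≠ 0) :
    Real.cos (Complex.arg a - Complex.arg b)
      = (a * (starRingEnd ℂ) b).re / (‖a‖ * ‖b‖) := by
  rw [Real.cos_sub, Complex.cos_arg ha, Complex.cos_arg hb, Complex.sin_arg, Complex.sin_arg]
  have hA : ‖a‖ ≠ 0 := norm_ne_zero_iff.mpr ha
  have hB : ‖b‖ ≠ 0 := norm_ne_zero_iff.mpr hb
  simp only [Complex.mul_re, Complex.conj_re, Complex.conj_im]
  field_simp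
  ring

/-- Key geometric lemma: among six points in the annulus with pairwise distances `> 1`,
one of them has large inner product with any given unit vector. -/
lemma key_direction (α : ℝ) (hα0 : 0 < α) (hα : α ≤ 1/100) (u : ℂ)
    (hu : ‖u‖ = 1) (T : Finset ℂ) (hcard : 6 ≤ T.card)
    (hmem : ∀ w ∈ T, ‖w‖ ∈ Set.Ioo (1:ℝ) (1+α))
    (hsep : ∀ w ∈ T, ∀ w' ∈ T, w ≠ w' → 1 < ‖w - w'‖) :
    ∃ w ∈ T, ((1+α)^2)/2 < (w * (starRingEnd ℂ) u).re := by
  by_contra hcon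
  push_neg at hcon
  have hπ1 : (3.14 : ℝ) < Real.pi := Real.pi_gt_d2
  have hπ2 : Real.pi < 3.15 := Real.pi_lt_d2
  have hu0 : u ≠ 0 := by
    intro h; rw [h] at hu; simp at hu
  -- the angle of each point
  set θ : ℂ → ℝ := fun w => Complex.arg (w * (starRingEnd ℂ) u) with hθ
  set φ : ℂ → ℝ := fun w => if 0 ≤ θ w then θ w else θ w + 2 * Real.pi with hφ
  have hwne : ∀ w ∈ T, w ≠ 0 := by
    intro w hw h
    have := (hmem w hw).1
    rw [h] at this; norm_num at this
  have habs : ∀ w ∈ T, ‖w * (starRingEnd ℂ) u‖ = ‖w‖ := by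
    intro w hw; rw [norm_mul, Complex.norm_conj, hu, mul_one]
  have hne0 : ∀ w ∈ T, w * (starRingEnd ℂ) u ≠ 0 := by
    intro w hw
    exact mul_ne_zero (hwne w hw) (by simpa using hu0)
  -- each cos θ w is at most (1+α)^2/2 < 0.55
  have hcosθ : ∀ w ∈ T, Real.cos (θ w) < 0.55 := by
    intro w hw
    have h1 : Real.cos (θ w) = (w * (starRingEnd ℂ) u).re / ‖w‖ := by
      rw [hθ]
      simp only
      rw [Complex.cos_arg (hne0 w hw), habs w hw]
    rw [h1]
    have hw1 : (1:ℝ) < ‖w‖ := (hmem w hw).1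
    have hb := hcon w hw
    rcases le_or_gt (w * (starRingEnd ℂ) u).re 0 with h | h
    · have : (w * (starRingEnd ℂ) u).re / ‖w‖ ≤ 0 :=
        div_nonpos_of_nonpos_of_nonneg h (by positivity)
      linarith
    · have : (w * (starRingEnd ℂ) u).re / ‖w‖ < (w * (starRingEnd ℂ) u).re := by
        rw [div_lt_iff₀ (by linarith)]
        nlinarith
      nlinarith
  -- hence |θ w| > 0.9, so φ w ∈ (0.9, 2π - 0.9)
  have hφmem : ∀ w ∈ T, φ w ∈ Set.Ioo (0.9 : ℝ) (2 * Real.pi - 0.9) := by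
    intro w hw
    have habs9 : (0.9 : ℝ) < |θ w| := by
      by_contra h
      push_neg at h
      have h2 : Real.cos (0.9) ≤ Real.cos |θ w| :=
        Real.cos_le_cos_of_nonneg_of_le_pi (abs_nonneg _) (by linarith) h
      rw [Real.cos_abs] at h2
      have := hcosθ w hw
      have := cos_nine_tenths_ge
      linarith
    have hle : θ w ≤ Real.pi := Complex.arg_le_pi _
    have hgt : -Real.pi < θ w := Complex.neg_pi_lt_arg _
    rw [hφ]
    simp only
    split_ifs with h
    · rw [_root_.abs_of_nonneg h] at habs9
      constructor
      · exact habs9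
      · linarith
    · push_neg at h
      rw [_root_.abs_of_neg h] at habs9
      constructor
      · linarith
      · linarith
  -- pairwise: cos (θ w - θ w') ≤ (1+α)^2 - 1/2 < 0.55
  have hcospair : ∀ w ∈ T, ∀ w' ∈ T, w ≠ w' → Real.cos (θ w - θ w') < 0.55 := by
    intro w hw w' hw' hne
    have h1 : Real.cos (θ w - θ w')
        = (w * (starRingEnd ℂ) w').re / (‖w‖ * ‖w'‖) := by
      rw [hθ]
      simp only
      rw [cos_arg_sub _ _ (hne0 w hw) (hne0 w' hw'), habs w hw, habs w' hw']
      congr 2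
      have : (starRingEnd ℂ) (w' * (starRingEnd ℂ) u) = (starRingEnd ℂ) w' * u := by
        rw [map_mul, Complex.conj_conj]
      rw [this]
      have : w * (starRingEnd ℂ) u * ((starRingEnd ℂ) w' * u)
          = w * (starRingEnd ℂ) w' * ((starRingEnd ℂ) u * u) := by ring
      rw [this, mul_comm ((starRingEnd ℂ) u) u, Complex.mul_conj]
      have hn : Complex.normSq u = 1 := by
        rw [Complex.normSq_eq_norm_sq, hu]; norm_num
      rw [hn]
      simp
    rw [h1]
    have hw1 : (1:ℝ) < ‖w‖ := (hmem w hw).1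
    have hw2 : ‖w‖ < 1 + α := (hmem w hw).2
    have hw1' : (1:ℝ) < ‖w'‖ := (hmem w' hw').1
    have hw2' : ‖w'‖ < 1 + α := (hmem w' hw').2
    have hd := hsep w hw w' hw' hne
    have hlaw := law_of_cos w w'
    have hre : (w * (starRingEnd ℂ) w').re < (1+α)^2 - 1/2 := by nlinarith
    rcases le_or_gt (w * (starRingEnd ℂ) w').re 0 with h | h
    · have : (w * (starRingEnd ℂ) w').re / (‖w‖ * ‖w'‖) ≤ 0 :=
        div_nonpos_of_nonpos_of_nonneg h (by positivity)
      linarith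
    · have hp : (1:ℝ) < ‖w‖ * ‖w'‖ := by nlinarith
      have : (w * (starRingEnd ℂ) w').re / (‖w‖ * ‖w'‖)
          < (w * (starRingEnd ℂ) w').re := by
        rw [div_lt_iff₀ (by linarith)]
        exact (lt_mul_iff_one_lt_right h).mpr hp
      nlinarith
  -- cos (φ w - φ w') = cos (θ w - θ w')
  have hcosφ : ∀ w w' : ℂ, Real.cos (φ w - φ w') = Real.cos (θ w - θ w') := by
    intro w w'
    rw [hφ]
    simp only
    split_ifs with h1 h2 h2
    · rfl
    · have : θ w - (θ w' + 2 * Real.pi) = θ w - θ w' - 2 * Real.pi := by ring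
      rw [this, Real.cos_sub_two_pi]
    · have : θ w + 2 * Real.pi - θ w' = θ w - θ w' + 2 * Real.pi := by ring
      rw [this, Real.cos_add_two_pi]
    · have : θ w + 2 * Real.pi - (θ w' + 2 * Real.pi) = θ w - θ w' := by ring
      rw [this]
  -- pairwise separation of the φ's
  have hφsep : ∀ w ∈ T, ∀ w' ∈ T, w ≠ w' → (0.9 : ℝ) ≤ |φ w - φ w'| := by
    intro w hw w' hw' hne
    by_contra h
    push_neg at h
    have h2 : Real.cos (0.9) ≤ Real.cos |φ w - φ w'| :=
      Real.cos_le_cos_of_nonneg_of_le_pi (abs_nonneg _) (by linarith) h.le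
    rw [Real.cos_abs, hcosφ] at h2
    have := hcospair w hw w' hw' hne
    have := cos_nine_tenths_ge
    linarith
  -- pigeonhole: six φ's in an interval of length 2π - 1.8 < 4.5, pairwise ≥ 0.9 apart
  set L : ℝ := (2 * Real.pi - 1.8) / 5 with hL
  have hLpos : 0 < L := by rw [hL]; linarith
  have hL9 : L < 0.9 := by rw [hL]; linarith
  set f : ℂ → ℕ := fun w => ⌊(φ w - 0.9) / L⌋₊ with hf
  have hnn : ∀ w ∈ T, 0 ≤ (φ w - 0.9) / L := by
    intro w hw
    have hm := hφmem w hw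
    have : (0:ℝ) ≤ φ w - 0.9 := by linarith [hm.1]
    positivity
  have hmaps : ∀ w ∈ T, f w ∈ Finset.range 5 := by
    intro w hw
    have hm := hφmem w hw
    rw [hf, Finset.mem_range]
    simp only
    rw [Nat.floor_lt (hnn w hw)]
    rw [div_lt_iff₀ hLpos]
    push_cast
    rw [hL]
    linarith [hm.2]
  obtain ⟨w, hw, w', hw', hne, hfeq⟩ :=
    Finset.exists_ne_map_eq_of_card_lt_of_maps_to
      (by rw [Finset.card_range]; omega) hmaps
  -- same floor ⇒ |φ w - φ w'| < L < 0.9, contradiction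
  have ha := hnn w hw
  have hb := hnn w' hw'
  have h1 : (φ w - 0.9) / L < f w' + 1 := by
    rw [← hfeq, hf]
    exact Nat.lt_floor_add_one _
  have h2 : (φ w' - 0.9) / L < f w + 1 := by
    rw [hfeq, hf]
    exact Nat.lt_floor_add_one _
  have h3 : (f w : ℝ) ≤ (φ w - 0.9) / L := Nat.floor_le ha
  have h4 : (f w' : ℝ) ≤ (φ w' - 0.9) / L := Nat.floor_le hb
  have hfr : (f w : ℝ) = (f w' : ℝ) := by exact_mod_cast congrArg Nat.cast hfeq
  have hd1 : (φ w - 0.9) / L - (φ w' - 0.9) / L < 1 := by linarith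
  have hd2 : (φ w' - 0.9) / L - (φ w - 0.9) / L < 1 := by linarith
  have hdiff : |φ w - φ w'| < L := by
    have e1 : (φ w - 0.9) / L - (φ w' - 0.9) / L = (φ w - φ w') / L := by ring
    rw [e1] at hd1
    have e2 : (φ w' - 0.9) / L - (φ w - 0.9) / L = -(φ w - φ w') / L := by ring
    rw [e2] at hd2
    have h5 : φ w - φ w' < L := (div_lt_one hLpos).mp hd1
    have h6 : -(φ w - φ w') < L := (div_lt_one hLpos).mp hd2
    rw [abs_lt]
    exact ⟨by linarith, h5⟩
  have := hφsep w hw w' hw' hne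
  linarith


/-- Greedy step: from any `x ∈ X` there is a neighbor strictly closer to `y`. -/
lemma exists_closer (α : ℝ) (hα0 : 0 < α) (hα : α ≤ 1/100) (X : Set ℂ)
    (hloc : ∀ s : Set ℂ, Bornology.IsBounded s → (X ∩ s).Finite)
    (hpair : ∀ x ∈ X, ∀ y ∈ X, x ≠ y → 1 < ‖x - y‖)
    (hsix : ∀ x ∈ X, ({y ∈ X | ‖y - x‖ ∈ Set.Ioo (1 : ℝ) (1 + α)}).ncard = 6)
    (x : ℂ) (hx : x ∈ X) (y : ℂ) (hy : y ∈ X) (hxy : x ≠ y) :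
    ∃ z ∈ X, ‖z - x‖ ∈ Set.Ioo (1:ℝ) (1+α) ∧
      ‖z - y‖ < ‖x - y‖ := by
  classical
  set N : Set ℂ := {z ∈ X | ‖z - x‖ ∈ Set.Ioo (1 : ℝ) (1 + α)} with hN
  have hNfin : N.Finite := by
    have h1 : N ⊆ X ∩ Metric.closedBall x (1 + α) := by
      intro z hz
      refine ⟨hz.1, ?_⟩
      rw [Metric.mem_closedBall, Complex.dist_eq]
      exact le_of_lt hz.2.2
    exact Set.Finite.subset (hloc _ Metric.isBounded_closedBall) h1
  have hNcard : N.ncard = 6 := hsix x hx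
  -- the unit vector toward y
  set d : ℝ := ‖y - x‖ with hd
  have hd1 : 1 < d := by
    rw [hd]
    exact hpair y hy x hx (Ne.symm hxy)
  have hd0 : (0:ℝ) < d := by linarith
  set u : ℂ := (y - x) / (d : ℂ) with hu
  have hdc : (d : ℂ) ≠ 0 := by
    simp only [ne_eq, Complex.ofReal_eq_zero]
    linarith
  have hu1 : ‖u‖ = 1 := by
    rw [hu, norm_div, Complex.norm_real, Real.norm_eq_abs, _root_.abs_of_pos hd0, ← hd, div_self (by linarith)]
  -- build the finset of translated neighbors
  set T : Finset ℂ := hNfin.toFinset.image (fun z => z - x) with hT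
  have hTcard : 6 ≤ T.card := by
    rw [hT, Finset.card_image_of_injective _ (sub_left_injective),
      ← Set.ncard_eq_toFinset_card N hNfin, hNcard]
  have hTmem : ∀ w ∈ T, ‖w‖ ∈ Set.Ioo (1:ℝ) (1+α) := by
    intro w hw
    rw [hT, Finset.mem_image] at hw
    obtain ⟨z, hz, rfl⟩ := hw
    rw [Set.Finite.mem_toFinset] at hz
    exact hz.2
  have hTsep : ∀ w ∈ T, ∀ w' ∈ T, w ≠ w' → 1 < ‖w - w'‖ := by
    intro w hw w' hw' hne
    rw [hT, Finset.mem_image] at hw hw'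
    obtain ⟨z, hz, rfl⟩ := hw
    obtain ⟨z', hz', rfl⟩ := hw'
    rw [Set.Finite.mem_toFinset] at hz hz'
    have hzz : z ≠ z' := by
      intro h; apply hne; rw [h]
    have : z - x - (z' - x) = z - z' := by ring
    rw [this]
    exact hpair z hz.1 z' hz'.1 hzz
  obtain ⟨w, hw, hkey⟩ := key_direction α hα0 hα u hu1 T hTcard hTmem hTsep
  rw [hT, Finset.mem_image] at hw
  obtain ⟨z, hz, rfl⟩ := hw
  rw [Set.Finite.mem_toFinset] at hz
  refine ⟨z, hz.1, hz.2, ?_⟩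
  -- show strict decrease
  have hzx1 : 1 < ‖z - x‖ := hz.2.1
  have hzx2 : ‖z - x‖ < 1 + α := hz.2.2
  -- re ((z - x) * conj (y - x)) = d * re ((z - x) * conj u)
  have hyx : (y - x) = (d : ℂ) * u := by
    rw [hu, mul_div_cancel₀ _ hdc]
  have hre : ((z - x) * (starRingEnd ℂ) (y - x)).re
      = d * ((z - x) * (starRingEnd ℂ) u).re := by
    rw [hyx, map_mul, Complex.conj_ofReal]
    have : (z - x) * ((d:ℂ) * (starRingEnd ℂ) u) = (d:ℂ) * ((z - x) * (starRingEnd ℂ) u) := by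
      ring
    rw [this, Complex.re_ofReal_mul]
  have hlaw : (‖z - y‖)^2
      = (‖z - x‖)^2 + d^2 - 2 * ((z - x) * (starRingEnd ℂ) (y - x)).re := by
    have h1 : z - y = (z - x) - (y - x) := by ring
    rw [h1, law_of_cos, hd]
  have hr : (1+α)^2/2 < ((z - x) * (starRingEnd ℂ) u).re := hkey
  have hsq : (‖z - y‖)^2 < d^2 := by
    rw [hlaw, hre]
    nlinarith
  have habs : ‖x - y‖ = d := by
    rw [hd, ← norm_neg (x - y)]
    congr 1
    ring
  rw [habs]
  exact lt_of_pow_lt_pow_left₀ 2 (le_of_lt hd0) hsq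

/-- Connectivity of the neighbor graph `K(X)`: if `X ⊂ ℝ²` is locally finite with
pairwise distances `> 1` and every point of `X` has exactly six points of `X` in its
open annulus of radii `1` and `1+α` (with `α > 0` small enough), then any two points
of `X` are joined by a path along edges of length in `(1, 1+α)`. -/
theorem neighbor_graph_connected :
    ∃ α₀ > (0 : ℝ), ∀ α ∈ Set.Ioo (0 : ℝ) α₀, ∀ X : Set ℂ,
      (∀ s : Set ℂ, Bornology.IsBounded s → (X ∩ s).Finite) →
      (∀ x ∈ X, ∀ y ∈ X, x ≠ y → 1 < ‖x - y‖) →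
      (∀ x ∈ X, ({y ∈ X | ‖y - x‖ ∈ Set.Ioo (1 : ℝ) (1 + α)}).ncard = 6) →
      ∀ x ∈ X, ∀ y ∈ X,
        Relation.ReflTransGen
          (fun a b => a ∈ X ∧ b ∈ X ∧ ‖a - b‖ ∈ Set.Ioo (1 : ℝ) (1 + α))
          x y := by
  classical
  refine ⟨1/100, by norm_num, ?_⟩
  intro α hα X hloc hpair hsix x hx y hy
  set R : ℂ → ℂ → Prop :=
    fun a b => a ∈ X ∧ b ∈ X ∧ ‖a - b‖ ∈ Set.Ioo (1 : ℝ) (1 + α) with hR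
  have hαa : 0 < α := hα.1
  have hαb : α ≤ 1/100 := le_of_lt hα.2
  -- finiteness of the "closer" sets
  have hfin : ∀ x' : ℂ, ({w ∈ X | ‖w - y‖ < ‖x' - y‖}).Finite := by
    intro x'
    apply Set.Finite.subset (hloc (Metric.closedBall y (‖x' - y‖))
      Metric.isBounded_closedBall)
    intro w hw
    exact ⟨hw.1, by rw [Metric.mem_closedBall, Complex.dist_eq]; exact le_of_lt hw.2⟩
  -- strong induction on the number of points closer to y
  suffices H : ∀ n : ℕ, ∀ x' ∈ X,
      ({w ∈ X | ‖w - y‖ < ‖x' - y‖}).ncard ≤ n →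
      Relation.ReflTransGen R x' y by
    exact H _ x hx le_rfl
  intro n
  induction n using Nat.strong_induction_on with
  | _ n ih =>
    intro x' hx' hcard
    by_cases hxy : x' = y
    · rw [hxy]
    · obtain ⟨z, hzX, hzx, hzy⟩ :=
        exists_closer α hαa hαb X hloc hpair hsix x' hx' y hy hxy
      have hzmem : z ∈ {w ∈ X | ‖w - y‖ < ‖x' - y‖} := ⟨hzX, hzy⟩
      have hsub : {w ∈ X | ‖w - y‖ < ‖z - y‖}
          ⊂ {w ∈ X | ‖w - y‖ < ‖x' - y‖} := by
        constructor
        · intro w hw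
          exact ⟨hw.1, lt_trans hw.2 hzy⟩
        · intro hcon
          have := hcon hzmem
          exact absurd this.2 (lt_irrefl _)
      have hlt : ({w ∈ X | ‖w - y‖ < ‖z - y‖}).ncard
          < ({w ∈ X | ‖w - y‖ < ‖x' - y‖}).ncard :=
        Set.ncard_lt_ncard hsub (hfin x')
      have hedge : R x' z := by
        refine ⟨hx', hzX, ?_⟩
        rw [norm_sub_rev]
        exact hzx
      have hm : ({w ∈ X | ‖w - y‖ < ‖z - y‖}).ncard < n := by
        omega
      exact Relation.ReflTransGen.head hedge
        (ih _ hm z hzX le_rfl)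
end
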